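/- Let H be a Hilbert space, a(·,·) a bounded symmetric bilinear form, S : H → H an a-symmetric operator satisfying HC, and μ ≠ 0 an eigenvalue of S with finite-dimensional eigenspace M(μ). Then there exists a basis u₁,…,uₘ of M(μ) such that a(uᵢ,uⱼ) = 0 for i ≠ j, and all a(uᵢ,uᵢ) are nonzero and have the same sign; consequently there exist constants 0 < c_s ≤ c_b with c_s‖v‖² ≤ |a(v,v)| ≤ c_b‖v‖² for all v ∈ M(μ). -/

import Mathlib

/-- on the finite-dimensional eigenspace `M(μ)` (`μ ≠ 0`) of an `a`-symmetric
operator satisfying HC, there is an `a`-orthogonal basis on which `a` is definite of one sign,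
and consequently `|a(v,v)|` is equivalent to `‖v‖²` on `M(μ)`. -/
theorem stmt_6 {H : Type*} [NormedAddCommGroup H] [InnerProductSpace ℝ H] [CompleteSpace H]
    (a : H →L[ℝ] H →L[ℝ] ℝ) (hsymm : ∀ u v, a u v = a v u)
    (S : H →L[ℝ] H) (hS : ∀ u v, a (S u) v = a u (S v))
    (hHC : ∀ w : H, a (S w) w = 0 ↔ S w = 0)
    (μ : ℝ) (hμ : μ ≠ 0)
    (Mμ : Submodule ℝ H) (hMμ : ∀ x : H, x ∈ Mμ ↔ S x = μ • x)
    [FiniteDimensional ℝ Mμ] :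
    ∃ u : Fin (Module.finrank ℝ Mμ) → H,
      (∀ i, u i ∈ Mμ) ∧ LinearIndependent ℝ u ∧
      Submodule.span ℝ (Set.range u) = Mμ ∧
      (∀ i j, i ≠ j → a (u i) (u j) = 0) ∧
      ((∀ i, 0 < a (u i) (u i)) ∨ (∀ i, a (u i) (u i) < 0)) ∧
      ∃ cs cb : ℝ, 0 < cs ∧ cs ≤ cb ∧
        ∀ v ∈ Mμ, cs * ‖v‖ ^ 2 ≤ |a v v| ∧ |a v v| ≤ cb * ‖v‖ ^ 2 := by
  -- anisotropy on Mμ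
  have hzero : ∀ x : H, x ∈ Mμ → a x x = 0 → x = 0 := by
    intro x hx h0
    have hsx : S x = μ • x := (hMμ x).1 hx
    have h1 : a (S x) x = 0 := by rw [hsx, map_smul]; simp [h0]
    have h2 := (hHC x).1 h1
    rw [hsx] at h2
    rcases smul_eq_zero.mp h2 with h | h
    · exact absurd h hμ
    · exact h
  -- sign coherence
  have key : ∀ x y : H, x ∈ Mμ → y ∈ Mμ → x ≠ 0 → y ≠ 0 →
      0 < a x x → a y y < 0 → False := by
    intro x y hx hy hx0 hy0 hax hay
    set f : ℝ → ℝ := fun t => a ((1-t) • x + t • y) ((1-t) • x + t • y) with hf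
    have hcont : Continuous f := by fun_prop
    have hf0 : f 0 = a x x := by simp [hf]
    have hf1 : f 1 = a y y := by simp [hf]
    have hmem : (0 : ℝ) ∈ Set.Icc (f 1) (f 0) := by
      constructor <;> [rw [hf1]; rw [hf0]] <;> linarith
    obtain ⟨t, ht01, hft⟩ := intermediate_value_Icc' (by norm_num : (0:ℝ) ≤ 1)
      hcont.continuousOn hmem
    set z : H := (1-t) • x + t • y with hz
    have hzM : z ∈ Mμ := Mμ.add_mem (Mμ.smul_mem _ hx) (Mμ.smul_mem _ hy)
    have hz0 : z = 0 := hzero z hzM hft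
    by_cases ht1 : t = 1
    · have hz0' : (1-t) • x + t • y = 0 := hz0
      rw [ht1] at hz0'
      simp at hz0'
      exact hy0 hz0'
    · have h1t : (1 : ℝ) - t ≠ 0 := by
        intro h; exact ht1 (by linarith)
      have hx_eq : x = (-(1-t)⁻¹ * t) • y := by
        have : (1-t) • x = -(t • y) := by
          rw [eq_neg_iff_add_eq_zero]; exact hz0
        calc x = (1-t)⁻¹ • ((1-t) • x) := by rw [smul_smul, inv_mul_cancel₀ h1t, one_smul]
          _ = (1-t)⁻¹ • (-(t • y)) := by rw [this]
          _ = (-(1-t)⁻¹ * t) • y := by rw [smul_neg, smul_smul, ← neg_smul]; congr 1; ring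
      have : a x x = (-(1-t)⁻¹ * t)^2 * a y y := by
        rw [hx_eq, map_smul]; simp [sq]; ring
      nlinarith [sq_nonneg (-(1-t)⁻¹ * t)]
  have hsign : (∀ x : H, x ∈ Mμ → x ≠ 0 → 0 < a x x) ∨
      (∀ x : H, x ∈ Mμ → x ≠ 0 → a x x < 0) := by
    by_cases hpos : ∃ x : H, x ∈ Mμ ∧ x ≠ 0 ∧ 0 < a x x
    · obtain ⟨x, hx, hx0, hax⟩ := hpos
      left
      intro y hy hy0
      rcases lt_trichotomy (a y y) 0 with h | h | h
      · exact absurd (key x y hx hy hx0 hy0 hax h) id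
      · exact absurd (hzero y hy h) hy0
      · exact h
    · right
      intro y hy hy0
      rcases lt_trichotomy (a y y) 0 with h | h | h
      · exact h
      · exact absurd (hzero y hy h) hy0
      · exact absurd ⟨y, hy, hy0, h⟩ hpos
  -- restricted bilinear form
  let B : LinearMap.BilinForm ℝ Mμ := LinearMap.mk₂ ℝ (fun x y : Mμ => a x y)
    (by intros; push_cast; simp) (by intros; push_cast; simp)
    (by intros; push_cast; simp) (by intros; push_cast; simp)
  have hBapp : ∀ x y : Mμ, B x y = a x y := fun x y => rfl
  have hBsymm : B.IsSymm := by
    constructor; intro x y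
    simpa [hBapp] using hsymm (x : H) (y : H)
  haveI : Invertible (2 : ℝ) := invertibleOfNonzero two_ne_zero
  obtain ⟨b, hb⟩ := LinearMap.BilinForm.exists_orthogonal_basis (LinearMap.BilinForm.isSymm_iff.mp hBsymm)
  refine ⟨fun i => (b i : H), fun i => (b i).2, ?_, ?_, ?_, ?_, ?_⟩
  · exact b.linearIndependent.map' Mμ.subtype Mμ.ker_subtype
  · have : Set.range (fun i => ((b i : H))) = Mμ.subtype '' Set.range b := by
      ext x; simp [Set.range_comp]
    rw [this, Submodule.span_image, b.span_eq, Submodule.map_top, Submodule.range_subtype]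
  · intro i j hij
    exact hb hij
  · have hbne : ∀ i, (b i : H) ≠ 0 := by
      intro i h
      exact b.ne_zero i (Subtype.ext h)
    rcases hsign with h | h
    · exact Or.inl fun i => h _ (b i).2 (hbne i)
    · exact Or.inr fun i => h _ (b i).2 (hbne i)
  -- constants
  · rcases subsingleton_or_nontrivial Mμ with hsub | hnt
    · refine ⟨1, 1, one_pos, le_refl _, fun v hv => ?_⟩
      have : (⟨v, hv⟩ : Mμ) = 0 := Subsingleton.elim _ _
      have hv0 : v = 0 := congrArg Subtype.val this
      simp [hv0]
    · have hcs : IsCompact (Metric.sphere (0 : Mμ) 1) := isCompact_sphere _ _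
      have hne : (Metric.sphere (0 : Mμ) 1).Nonempty :=
        NormedSpace.sphere_nonempty.mpr zero_le_one
      have hFc : Continuous fun x : Mμ => |a x x| := by fun_prop
      obtain ⟨xm, hxm, hmin⟩ := hcs.exists_isMinOn hne hFc.continuousOn
      obtain ⟨xM, hxM, hmax⟩ := hcs.exists_isMaxOn hne hFc.continuousOn
      have hxm0 : (xm : H) ≠ 0 := by
        intro h
        have : xm = 0 := Subtype.ext h
        rw [this] at hxm; simp at hxm
      have hcspos : 0 < |a xm xm| := by
        rw [abs_pos]
        intro h
        exact hxm0 (hzero _ xm.2 h)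
      refine ⟨|a xm xm|, |a xM xM|, hcspos, hmin hxM, fun v hv => ?_⟩
      by_cases hv0 : v = 0
      · simp [hv0]
      · set vs : Mμ := ⟨v, hv⟩ with hvs
        have hvn : ‖vs‖ = ‖v‖ := rfl
        have hvnn : (0:ℝ) < ‖v‖ := norm_pos_iff.mpr hv0
        set w : Mμ := ‖v‖⁻¹ • vs with hw
        have hwmem : w ∈ Metric.sphere (0 : Mμ) 1 := by
          simp [hw, norm_smul, hvn, abs_of_pos (inv_pos.mpr hvnn),
            inv_mul_cancel₀ (ne_of_gt hvnn)]
        have hwc : (w : H) = ‖v‖⁻¹ • v := rfl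
        have haw : |a (w : H) (w : H)| = ‖v‖⁻¹ ^ 2 * |a v v| := by
          rw [hwc, map_smul]
          simp [abs_mul, sq, abs_of_pos (inv_pos.mpr hvnn)]
          ring
        have h1 := hmin hwmem
        have h2 := hmax hwmem
        simp only [IsMinOn, IsMaxOn] at h1 h2
        have hle1 : |a xm xm| ≤ |a (w:H) (w:H)| := hmin hwmem
        have hle2 : |a (w:H) (w:H)| ≤ |a xM xM| := hmax hwmem
        rw [haw] at hle1 hle2
        constructor
        · have := mul_le_mul_of_nonneg_right hle1 (le_of_lt (pow_pos hvnn 2))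
          calc |a xm xm| * ‖v‖^2 ≤ ‖v‖⁻¹^2 * |a v v| * ‖v‖^2 := this
            _ = |a v v| := by field_simp
        · have := mul_le_mul_of_nonneg_right hle2 (le_of_lt (pow_pos hvnn 2))
          calc |a v v| = ‖v‖⁻¹^2 * |a v v| * ‖v‖^2 := by field_simp
            _ ≤ |a xM xM| * ‖v‖^2 := this
          -- fix order
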